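/- (Total variation continuity of the resampling density.) Let V be in the class 𝒞 with growth exponent K. There exists a constant C > 0 such that for all b, b', c, c' ∈ ℝ, writing Δ = (|b'−b| + |c'−c|)/2, one has (1/2)·∫_ℝ |ρ_{b,c}(u) − ρ_{b',c'}(u)| du ≤ C·Δ·max(1, |c−b|^K). -/

import Mathlib

open MeasureTheory Filter Real

noncomputable section

/-- The class 𝒞 of potentials: convex, at most polynomial growth, non-affine
(the asymptotic slopes at `+∞` and `-∞`, taken in the extended reals, differ). -/
structure InClassC (V : ℝ → ℝ) : Prop where
  convex : ConvexOn ℝ Set.univ V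
  growth : ∃ C > (0 : ℝ), ∃ K : ℝ, 1 ≤ K ∧ ∀ x : ℝ, |V x| ≤ C * (1 + |x|) ^ K
  slopes : ∃ vm vp : EReal,
    Tendsto (fun x : ℝ => ((V x / x : ℝ) : EReal)) atBot (nhds vm) ∧
    Tendsto (fun x : ℝ => ((V x / x : ℝ) : EReal)) atTop (nhds vp) ∧
    vm < vp

/-- The resampling density `ρ_{b,c}`. -/
def rho (V : ℝ → ℝ) (b c u : ℝ) : ℝ :=
  Real.exp (-(V (u - b) + V (c - u))) / ∫ s : ℝ, Real.exp (-(V (s - b) + V (c - s)))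

open Set

private lemma shift_pre (r a : ℝ) : (· + a) ⁻¹' (Ioi r) = Ioi (r - a) := by
  ext x; simp only [Set.mem_preimage, Set.mem_Ioi]; constructor <;> intro h <;> linarith

private lemma shift_Ioi_integral (f : ℝ → ℝ) (r a : ℝ) :
    ∫ x in Ioi r, f (x - a) = ∫ x in Ioi (r - a), f x := by
  have h := (measurePreserving_add_right volume a).setIntegral_preimage_emb
    (Homeomorph.addRight a).measurableEmbedding (fun y => f (y - a)) (Ioi r)
  rw [shift_pre] at h
  rw [← h]
  simp

private lemma shift_Ioi_integrableOn {f : ℝ → ℝ} {r a : ℝ}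
    (hf : IntegrableOn f (Ioi (r - a))) : IntegrableOn (fun x => f (x - a)) (Ioi r) := by
  have h := ((measurePreserving_add_right volume a).restrict_preimage_emb
    (Homeomorph.addRight a).measurableEmbedding (Ioi r)).integrable_comp_emb
    (Homeomorph.addRight a).measurableEmbedding (g := fun y => f (y - a))
  rw [shift_pre] at h
  have he : ((fun y => f (y - a)) ∘ fun x => x + a) = f := by funext x; simp
  rw [he] at h
  exact h.1 hf

private lemma refl_pre (r a : ℝ) : (fun t : ℝ => a - t) ⁻¹' (Ioi r) = Iio (a - r) := by
  ext x; simp only [Set.mem_preimage, Set.mem_Ioi, Set.mem_Iio]; constructor <;> intro h <;> linarith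

private lemma refl_Iio_integral (f : ℝ → ℝ) (r a : ℝ) :
    ∫ x in Iio (a - r), f (a - x) = ∫ x in Ioi r, f x := by
  have h := (Measure.measurePreserving_sub_left volume a).setIntegral_preimage_emb
    (Homeomorph.subLeft a).measurableEmbedding f (Ioi r)
  rwa [refl_pre] at h

private lemma refl_Iio_integrableOn {f : ℝ → ℝ} {r a : ℝ}
    (hf : IntegrableOn f (Ioi r)) : IntegrableOn (fun x => f (a - x)) (Iio (a - r)) := by
  have h := ((Measure.measurePreserving_sub_left volume a).restrict_preimage_emb
    (Homeomorph.subLeft a).measurableEmbedding (Ioi r)).integrable_comp_emb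
    (Homeomorph.subLeft a).measurableEmbedding (g := f)
  rw [refl_pre] at h
  exact h.2 hf

private lemma slope4 {V : ℝ → ℝ} (hV : ConvexOn ℝ Set.univ V) {x y z w : ℝ}
    (h1 : x < y) (h2 : y ≤ z) (h3 : z < w) :
    (V y - V x) / (y - x) ≤ (V w - V z) / (w - z) := by
  rcases eq_or_lt_of_le h2 with rfl | h2
  · exact hV.slope_mono_adjacent trivial trivial h1 h3
  · exact le_trans (hV.slope_mono_adjacent trivial trivial h1 h2)
      (hV.slope_mono_adjacent trivial trivial h2 h3)

private lemma lipV {V : ℝ → ℝ} (hV : ConvexOn ℝ Set.univ V) {C₀ K : ℝ}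
    (hC₀ : 0 < C₀) (hK : 1 ≤ K) (hg : ∀ x, |V x| ≤ C₀ * (1 + |x|) ^ K) :
    ∀ x y : ℝ, |V x - V y| ≤ 2 * C₀ * (2 + max |x| |y|) ^ K * |x - y| := by
  have hK0 : (0:ℝ) ≤ K := by linarith
  have key : ∀ x y : ℝ, x < y → |V y - V x| ≤ 2 * C₀ * (2 + max |x| |y|) ^ K * (y - x) := by
    intro x y hxy
    set M := 2 * C₀ * (2 + max |x| |y|) ^ K with hM
    have hyx : 0 < y - x := by linarith
    have hB : ∀ z : ℝ, |z| + 1 ≤ 2 + max |x| |y| → |V z| ≤ (C₀ * (2 + max |x| |y|) ^ K) := by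
      intro z hz
      refine (hg z).trans ?_
      have h1 : (0:ℝ) ≤ 1 + |z| := by positivity
      have h2 : (1 + |z|) ^ K ≤ (2 + max |x| |y|) ^ K :=
        Real.rpow_le_rpow h1 (by linarith) hK0
      exact mul_le_mul_of_nonneg_left h2 (le_of_lt hC₀)
    have h1 : (V y - V x) / (y - x) ≤ V (y + 1) - V y := by
      have := slope4 hV hxy (le_refl y) (lt_add_one y)
      simpa using this
    have h2 : V x - V (x - 1) ≤ (V y - V x) / (y - x) := by
      have := slope4 hV (sub_one_lt x) (le_refl x) hxy
      simpa using this
    have hy1 : |V (y+1)| ≤ C₀ * (2 + max |x| |y|) ^ K := by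
      apply hB
      have h3 : |y + 1| ≤ |y| + 1 := by simpa using abs_add_le y 1
      linarith [le_max_right |x| |y|]
    have hy0 : |V y| ≤ C₀ * (2 + max |x| |y|) ^ K := by
      apply hB; linarith [le_max_right |x| |y|]
    have hx0 : |V x| ≤ C₀ * (2 + max |x| |y|) ^ K := by
      apply hB; linarith [le_max_left |x| |y|]
    have hx1 : |V (x-1)| ≤ C₀ * (2 + max |x| |y|) ^ K := by
      apply hB
      have h3 : |x - 1| ≤ |x| + 1 := by simpa using abs_sub x 1
      linarith [le_max_left |x| |y|]
    have hub : (V y - V x) / (y - x) ≤ M := by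
      have := abs_le.1 hy1
      have := abs_le.1 hy0
      calc (V y - V x) / (y - x) ≤ V (y+1) - V y := h1
        _ ≤ M := by rw [hM]; nlinarith [abs_le.1 hy1, abs_le.1 hy0]
    have hlb : -M ≤ (V y - V x) / (y - x) := by
      calc -M ≤ V x - V (x-1) := by rw [hM]; nlinarith [abs_le.1 hx0, abs_le.1 hx1]
        _ ≤ _ := h2
    have habs : |(V y - V x) / (y - x)| ≤ M := abs_le.2 ⟨hlb, hub⟩
    calc |V y - V x| = |(V y - V x) / (y - x)| * (y - x) := by
          rw [abs_div, abs_of_pos hyx]; field_simp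
      _ ≤ M * (y - x) := by apply mul_le_mul_of_nonneg_right habs (le_of_lt hyx)
  intro x y
  rcases lt_trichotomy x y with h | h | h
  · rw [abs_sub_comm (V x), abs_sub_comm x y, abs_of_pos (show (0:ℝ) < y - x by linarith)]
    exact key x y h
  · subst h; simp
  · rw [abs_of_pos (show (0:ℝ) < x - y by linarith)]
    have := key y x h
    rwa [max_comm |y| |x|] at this

private lemma H_slopes {V : ℝ → ℝ} {ε A sp sm : ℝ} (hε : 0 < ε) (hA : 1 ≤ A)
    (hsps : ε ≤ sp - sm)
    (Hrt : ∀ x y : ℝ, A ≤ x → x ≤ y → sp * (y - x) ≤ V y - V x)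
    (Hlt : ∀ x y : ℝ, y ≤ x → x ≤ -A → V x - V y ≤ sm * (x - y)) (b c : ℝ) :
    (∀ u v : ℝ, max b c + A ≤ u → u ≤ v →
        ε * (v - u) ≤ (V (v - b) + V (c - v)) - (V (u - b) + V (c - u))) ∧
    (∀ u v : ℝ, u ≤ v → v ≤ min b c - A →
        ε * (v - u) ≤ (V (u - b) + V (c - u)) - (V (v - b) + V (c - v))) := by
  constructor
  · intro u v hu huv
    have hb : b ≤ max b c := le_max_left _ _
    have hc : c ≤ max b c := le_max_right _ _
    have h1 : sp * ((v - b) - (u - b)) ≤ V (v - b) - V (u - b) :=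
      Hrt (u - b) (v - b) (by linarith) (by linarith)
    have h2 : V (c - u) - V (c - v) ≤ sm * ((c - u) - (c - v)) :=
      Hlt (c - u) (c - v) (by linarith) (by linarith)
    nlinarith [mul_le_mul_of_nonneg_right hsps (show (0:ℝ) ≤ v - u by linarith)]
  · intro u v huv hv
    have hb : min b c ≤ b := min_le_left _ _
    have hc : min b c ≤ c := min_le_right _ _
    have h1 : sp * ((c - u) - (c - v)) ≤ V (c - u) - V (c - v) :=
      Hrt (c - v) (c - u) (by linarith) (by linarith)
    have h2 : V (v - b) - V (u - b) ≤ sm * ((v - b) - (u - b)) :=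
      Hlt (v - b) (u - b) (by linarith) (by linarith)
    nlinarith [mul_le_mul_of_nonneg_right hsps (show (0:ℝ) ≤ v - u by linarith)]

private lemma minmax_abs (b c : ℝ) : b - min b c ≤ |c - b| ∧ c - min b c ≤ |c - b| ∧
    max b c - b ≤ |c - b| ∧ max b c - c ≤ |c - b| := by
  rcases le_total b c with h | h
  · rw [min_eq_left h, max_eq_right h, abs_of_nonneg (by linarith)]
    exact ⟨by linarith, by linarith, by linarith, by linarith⟩
  · rw [min_eq_right h, max_eq_left h, abs_of_nonpos (by linarith)]
    exact ⟨by linarith, by linarith, by linarith, by linarith⟩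

private lemma exp_diff_le (x y : ℝ) :
    |exp (-x) - exp (-y)| ≤ |x - y| * (exp (-x) + exp (-y)) := by
  have key : ∀ x y : ℝ, x ≤ y →
      |exp (-x) - exp (-y)| ≤ |x - y| * (exp (-x) + exp (-y)) := by
    intro x y h
    have hm : exp (-y) ≤ exp (-x) := Real.exp_le_exp.2 (by linarith)
    rw [abs_of_nonneg (by linarith), abs_of_nonpos (by linarith)]
    have h1 := Real.add_one_le_exp (x - y)
    have h2 : exp (-y) = exp (-x) * exp (x - y) := by rw [← Real.exp_add]; ring_nf
    nlinarith [Real.exp_pos (-x), Real.exp_pos (-y),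
      mul_le_mul_of_nonneg_left h1 (Real.exp_pos (-x)).le,
      mul_nonneg (show (0:ℝ) ≤ y - x by linarith) (Real.exp_pos (-y)).le]
  rcases le_total x y with h | h
  · exact key x y h
  · have := key y x h
    rwa [abs_sub_comm (exp (-y)), abs_sub_comm y x, add_comm (exp (-y))] at this

private lemma max_one_rpow {x K : ℝ} (hx : 0 ≤ x) (hK : 0 ≤ K) :
    max 1 (x ^ K) = (max 1 x) ^ K := by
  rcases le_total x 1 with h | h
  · rw [max_eq_left h, Real.one_rpow, max_eq_left]
    calc x ^ K ≤ 1 ^ K := Real.rpow_le_rpow hx h hK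
      _ = 1 := Real.one_rpow K
  · rw [max_eq_right h, max_eq_right (Real.one_le_rpow h hK)]

private lemma slope_extract {V : ℝ → ℝ} (hV : ConvexOn ℝ Set.univ V)
    (hsl : ∃ vm vp : EReal,
      Tendsto (fun x : ℝ => ((V x / x : ℝ) : EReal)) atBot (nhds vm) ∧
      Tendsto (fun x : ℝ => ((V x / x : ℝ) : EReal)) atTop (nhds vp) ∧ vm < vp) :
    ∃ ε A sp sm : ℝ, 0 < ε ∧ 1 ≤ A ∧ ε ≤ sp - sm ∧
      (∀ x y : ℝ, A ≤ x → x ≤ y → sp * (y - x) ≤ V y - V x) ∧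
      (∀ x y : ℝ, y ≤ x → x ≤ -A → V x - V y ≤ sm * (x - y)) := by
  obtain ⟨vm, vp, hbot, htop, hlt⟩ := hsl
  obtain ⟨m, hm1, hm2⟩ := EReal.exists_between_coe_real hlt
  obtain ⟨r, hr1, hr2⟩ := EReal.exists_between_coe_real hm1
  obtain ⟨s, hs1, hs2⟩ := EReal.exists_between_coe_real hm2
  have hrs : r < s := by
    have h1 : (r : EReal) < s := hr2.trans hs1
    exact_mod_cast h1
  -- eventual bounds at +∞ and -∞
  have htop' : ∀ᶠ x in atTop, s < V x / x := by
    have hmem : Ioi (s : EReal) ∈ nhds vp := isOpen_Ioi.mem_nhds hs2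
    filter_upwards [htop.eventually_mem hmem] with x hx
    have : (s : EReal) < ((V x / x : ℝ) : EReal) := hx
    exact_mod_cast this
  have hbot' : ∀ᶠ x in atBot, V x / x < r := by
    have hmem : Iio (r : EReal) ∈ nhds vm := isOpen_Iio.mem_nhds hr1
    filter_upwards [hbot.eventually_mem hmem] with x hx
    have : ((V x / x : ℝ) : EReal) < (r : EReal) := hx
    exact_mod_cast this
  obtain ⟨A₁, hA₁⟩ := (htop'.and (eventually_ge_atTop (1:ℝ))).exists_forall_of_atTop
  obtain ⟨A₂, hA₂⟩ := (hbot'.and (eventually_le_atBot (-1:ℝ))).exists_forall_of_atBot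
  -- pointwise linear lower bounds
  have hup : ∀ x : ℝ, A₁ ≤ x → s * x < V x := by
    intro x hx
    obtain ⟨h1, h2⟩ := hA₁ x hx
    have hx0 : (0:ℝ) < x := by linarith
    exact (lt_div_iff₀ hx0).1 h1
  have hdown : ∀ x : ℝ, x ≤ A₂ → r * x < V x := by
    intro x hx
    obtain ⟨h1, h2⟩ := hA₂ x hx
    have hx0 : x < 0 := by linarith
    exact (div_lt_iff_of_neg hx0).1 h1
  set δ : ℝ := (s - r) / 4 with hδ
  have hδ0 : 0 < δ := by rw [hδ]; linarith
  set B₁ : ℝ := A₁ + 1 + |s * A₁ - V A₁| / δ with hB₁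
  set B₂ : ℝ := A₂ - 1 - |V A₂ - r * A₂| / δ with hB₂
  have hB₁gt : A₁ < B₁ := by
    rw [hB₁]; have : 0 ≤ |s * A₁ - V A₁| / δ := by positivity
    linarith
  have hB₂lt : B₂ < A₂ := by
    rw [hB₂]; have : 0 ≤ |V A₂ - r * A₂| / δ := by positivity
    linarith
  have hslopeR : s - δ ≤ (V B₁ - V A₁) / (B₁ - A₁) := by
    have hd : 0 < B₁ - A₁ := by linarith
    rw [le_div_iff₀ hd]
    have h1 : s * B₁ < V B₁ := hup B₁ (by linarith)
    have h2 : |s * A₁ - V A₁| ≤ δ * (B₁ - A₁) := by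
      have : δ * (B₁ - A₁) = δ + |s * A₁ - V A₁| := by
        rw [hB₁]; field_simp; ring
      rw [this]; linarith [hδ0]
    have h3 : -(δ * (B₁ - A₁)) ≤ s * A₁ - V A₁ := neg_le_of_abs_le h2 |>.trans_eq rfl
    nlinarith [neg_abs_le (s * A₁ - V A₁), abs_le.1 h2]
  have hslopeL : (V A₂ - V B₂) / (A₂ - B₂) ≤ r + δ := by
    have hd : 0 < A₂ - B₂ := by linarith
    rw [div_le_iff₀ hd]
    have h1 : r * B₂ < V B₂ := hdown B₂ (by linarith)
    have h2 : |V A₂ - r * A₂| ≤ δ * (A₂ - B₂) := by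
      have : δ * (A₂ - B₂) = δ + |V A₂ - r * A₂| := by
        rw [hB₂]; field_simp; ring
      rw [this]; linarith [hδ0]
    nlinarith [le_abs_self (V A₂ - r * A₂)]
  refine ⟨(s - r)/2, max (max B₁ (-B₂)) 1, s - δ, r + δ, by linarith, le_max_right _ _, by rw [hδ]; ring_nf; linarith, ?_, ?_⟩
  · intro x y hx hxy
    rcases eq_or_lt_of_le hxy with rfl | hxy'
    · simp
    · have hBx : B₁ ≤ x := le_trans (le_trans (le_max_left _ _) (le_max_left _ _)) hx
      have hsl := slope4 hV hB₁gt hBx hxy'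
      have := le_trans hslopeR hsl
      have hyx : 0 < y - x := by linarith
      calc (s - δ) * (y - x) ≤ ((V y - V x)/(y - x)) * (y - x) :=
            mul_le_mul_of_nonneg_right this (le_of_lt hyx)
        _ = V y - V x := by field_simp
  · intro x y hyx hx
    rcases eq_or_lt_of_le hyx with rfl | hyx'
    · simp
    · have hxB : x ≤ B₂ := by
        have h1 : -B₂ ≤ max (max B₁ (-B₂)) 1 := le_trans (le_max_right _ _) (le_max_left _ _)
        linarith
      have hsl := slope4 hV hyx' hxB hB₂lt
      have := le_trans hsl hslopeL
      have hxy0 : 0 < x - y := by linarith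
      calc V x - V y = ((V x - V y)/(x - y)) * (x - y) := by field_simp
        _ ≤ (r + δ) * (x - y) := mul_le_mul_of_nonneg_right this (le_of_lt hxy0)

/-- The weight kernel is integrable. -/
private lemma J_integrableOn {ε K : ℝ} (hε : 0 < ε) (hK : 0 ≤ K) :
    IntegrableOn (fun t => (1+t)^K * exp (-(ε*t))) (Ioi (0:ℝ)) := by
  have h1 : IntegrableOn (fun t : ℝ => t ^ K * exp (-ε * t)) (Ioi 0) := by
    have := integrableOn_rpow_mul_exp_neg_mul_rpow (p := 1) (s := K) (b := ε)
      (by linarith) one_pos hε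
    refine this.congr_fun (fun x hx => ?_) measurableSet_Ioi
    simp only [Real.rpow_one]
  have h2 : IntegrableOn (fun t : ℝ => exp (-ε * t)) (Ioi 0) :=
    exp_neg_integrableOn_Ioi 0 hε
  have h3 : IntegrableOn (fun t : ℝ => 2^K * exp (-ε*t) + 2^K * (t^K * exp (-ε*t))) (Ioi 0) :=
    ((h2.const_mul _).add ((h1.const_mul _)))
  refine h3.mono' ?_ ?_
  · apply Continuous.aestronglyMeasurable
    exact ((continuous_const.add continuous_id).rpow_const (fun x => Or.inr hK)).mul
      (Real.continuous_exp.comp (continuous_const.mul continuous_id).neg)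
  · filter_upwards [ae_restrict_mem measurableSet_Ioi] with t ht
    have ht0 : (0:ℝ) < t := ht
    have hw0 : (0:ℝ) ≤ (1+t)^K := Real.rpow_nonneg (by linarith) _
    have hwb : (1+t)^K ≤ 2^K * (1 + t^K) := by
      rcases le_total t 1 with h | h
      · have : (1+t)^K ≤ 2^K := Real.rpow_le_rpow (by linarith) (by linarith) hK
        have h1K : (0:ℝ) ≤ t^K := Real.rpow_nonneg ht0.le _
        nlinarith [Real.rpow_nonneg (show (0:ℝ) ≤ 2 by norm_num) K]
      · have : (1+t)^K ≤ (2*t)^K := Real.rpow_le_rpow (by linarith) (by linarith) hK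
        rw [Real.mul_rpow (by norm_num) ht0.le] at this
        have h2K : (0:ℝ) ≤ (2:ℝ)^K := Real.rpow_nonneg (by norm_num) _
        nlinarith [Real.exp_pos (-(ε*t))]
    have : ‖(1+t)^K * exp (-(ε*t))‖ = (1+t)^K * exp (-(ε*t)) := by
      rw [Real.norm_eq_abs, abs_of_nonneg (by positivity)]
    rw [this]
    have he : exp (-(ε*t)) = exp (-ε*t) := by ring_nf
    rw [he]
    nlinarith [Real.exp_pos (-ε*t), Real.rpow_nonneg (show (0:ℝ) ≤ 2 by norm_num) K,
      Real.rpow_nonneg ht0.le K]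

section Tail
variable {h : ℝ → ℝ} {l₀ u₀ ε K : ℝ}

private lemma tail_right (hcont : Continuous h) (hε : 0 < ε)
    (Hr : ∀ u v : ℝ, u₀ ≤ u → u ≤ v → ε * (v - u) ≤ h v - h u) :
    ∀ v, u₀ + 1 ≤ v → exp (-h v) ≤ exp (ε * (1 - (v - u₀))) * ∫ s in Icc u₀ (u₀+1), exp (-h s) := by
  intro v hv
  have hIc : IntegrableOn (fun s => exp (-h s)) (Icc u₀ (u₀+1)) :=
    (Real.continuous_exp.comp hcont.neg).integrableOn_Icc
  have key : ∀ s ∈ Icc u₀ (u₀+1), exp (-h v) * exp (ε * (v - u₀ - 1)) ≤ exp (-h s) := by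
    intro s hs
    rw [← Real.exp_add]
    apply Real.exp_le_exp.2
    have h1 := Hr s v hs.1 (by linarith [hs.2])
    nlinarith [mul_le_mul_of_nonneg_left (show v - u₀ - 1 ≤ v - s by linarith [hs.2]) hε.le]
  have h2 := setIntegral_ge_of_const_le measurableSet_Icc
    (by rw [Real.volume_Icc]; exact ENNReal.ofReal_ne_top) key hIc
  rw [measureReal_def, Real.volume_Icc, smul_eq_mul] at h2
  have hvol : (ENNReal.ofReal (u₀ + 1 - u₀)).toReal = 1 := by
    rw [ENNReal.toReal_ofReal (by norm_num)]; ring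
  rw [hvol, one_mul] at h2
  have h4 := mul_le_mul_of_nonneg_right h2 (Real.exp_pos (ε*(1-(v-u₀)))).le
  calc exp (-h v) = exp (-h v) * exp (ε*(v-u₀-1)) * exp (ε*(1-(v-u₀))) := by
        rw [mul_assoc, ← Real.exp_add]
        have : ε*(v-u₀-1) + ε*(1-(v-u₀)) = 0 := by ring
        rw [this, Real.exp_zero, mul_one]
    _ ≤ (∫ s in Icc u₀ (u₀+1), exp (-h s)) * exp (ε*(1-(v-u₀))) := h4
    _ = exp (ε*(1-(v-u₀))) * ∫ s in Icc u₀ (u₀+1), exp (-h s) := mul_comm _ _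

private lemma tail_left (hcont : Continuous h) (hε : 0 < ε)
    (Hl : ∀ u v : ℝ, u ≤ v → v ≤ l₀ → ε * (v - u) ≤ h u - h v) :
    ∀ v, v ≤ l₀ - 1 → exp (-h v) ≤ exp (ε * (1 - (l₀ - v))) * ∫ s in Icc (l₀-1) l₀, exp (-h s) := by
  intro v hv
  have hIc : IntegrableOn (fun s => exp (-h s)) (Icc (l₀-1) l₀) :=
    (Real.continuous_exp.comp hcont.neg).integrableOn_Icc
  have key : ∀ s ∈ Icc (l₀-1) l₀, exp (-h v) * exp (ε * (l₀ - v - 1)) ≤ exp (-h s) := by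
    intro s hs
    rw [← Real.exp_add]
    apply Real.exp_le_exp.2
    have h1 := Hl v s (by linarith [hs.1]) hs.2
    nlinarith [mul_le_mul_of_nonneg_left (show l₀ - v - 1 ≤ s - v by linarith [hs.1]) hε.le]
  have h2 := setIntegral_ge_of_const_le measurableSet_Icc
    (by rw [Real.volume_Icc]; exact ENNReal.ofReal_ne_top) key hIc
  rw [measureReal_def, Real.volume_Icc, smul_eq_mul] at h2
  have hvol : (ENNReal.ofReal (l₀ - (l₀ - 1))).toReal = 1 := by
    rw [ENNReal.toReal_ofReal (by norm_num)]; ring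
  rw [hvol, one_mul] at h2
  have h4 := mul_le_mul_of_nonneg_right h2 (Real.exp_pos (ε*(1-(l₀-v)))).le
  calc exp (-h v) = exp (-h v) * exp (ε*(l₀-v-1)) * exp (ε*(1-(l₀-v))) := by
        rw [mul_assoc, ← Real.exp_add]
        have : ε*(l₀-v-1) + ε*(1-(l₀-v)) = 0 := by ring
        rw [this, Real.exp_zero, mul_one]
    _ ≤ (∫ s in Icc (l₀-1) l₀, exp (-h s)) * exp (ε*(1-(l₀-v))) := h4
    _ = _ := mul_comm _ _


private lemma weighted_right (hcont : Continuous h) (hε : 0 < ε) (hK : 0 ≤ K) (hlu : l₀ ≤ u₀)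
    (Hr : ∀ u v : ℝ, u₀ ≤ u → u ≤ v → ε * (v - u) ≤ h v - h u) :
    IntegrableOn (fun v => (1 + max 0 (max (l₀ - v) (v - u₀)))^K * exp (-h v)) (Ioi (u₀+1)) ∧
    (∫ v in Ioi (u₀+1), (1 + max 0 (max (l₀ - v) (v - u₀)))^K * exp (-h v))
      ≤ exp ε * (∫ t in Ioi (0:ℝ), (1+t)^K * exp (-(ε*t))) *
          ∫ s in Icc u₀ (u₀+1), exp (-h s) := by
  set J : ℝ → ℝ := fun t => (1+t)^K * exp (-(ε*t)) with hJdef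
  set Ir : ℝ := ∫ s in Icc u₀ (u₀+1), exp (-h s) with hIrdef
  have hIr0 : 0 ≤ Ir := setIntegral_nonneg measurableSet_Icc (fun x _ => (Real.exp_pos _).le)
  have hJ : IntegrableOn J (Ioi 0) := J_integrableOn hε hK
  have hJ1 : IntegrableOn J (Ioi 1) := hJ.mono_set (Ioi_subset_Ioi (by norm_num))
  have hJs : IntegrableOn (fun v => J (v - u₀)) (Ioi (u₀+1)) := by
    apply shift_Ioi_integrableOn
    rw [show u₀ + 1 - u₀ = (1:ℝ) by ring]
    exact hJ1
  have hJnn : ∀ t : ℝ, 0 < t → 0 ≤ J t := by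
    intro t ht
    exact mul_nonneg (Real.rpow_nonneg (by linarith) _) (Real.exp_pos _).le
  have hpt : ∀ v ∈ Ioi (u₀+1),
      (1 + max 0 (max (l₀ - v) (v - u₀)))^K * exp (-h v) ≤ exp ε * Ir * J (v - u₀) := by
    intro v hv
    have hv' : u₀ + 1 ≤ v := le_of_lt hv
    have hv'' : u₀ + 1 < v := hv
    have hmax : max 0 (max (l₀ - v) (v - u₀)) = v - u₀ := by
      rw [max_eq_right (show l₀ - v ≤ v - u₀ by linarith),
        max_eq_right (show (0:ℝ) ≤ v - u₀ by linarith)]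
    rw [hmax]
    have h1 := tail_right hcont hε Hr v hv'
    have hw : (0:ℝ) ≤ (1 + (v - u₀))^K := Real.rpow_nonneg (by linarith) _
    calc (1 + (v - u₀))^K * exp (-h v)
        ≤ (1 + (v - u₀))^K * (exp (ε * (1 - (v - u₀))) * Ir) :=
          mul_le_mul_of_nonneg_left h1 hw
      _ = exp ε * Ir * J (v - u₀) := by
          rw [hJdef]
          have : exp (ε * (1 - (v - u₀))) = exp ε * exp (-(ε * (v - u₀))) := by
            rw [← Real.exp_add]; ring_nf
          rw [this]; ring
  have hcw : Continuous fun v : ℝ => (1 + max 0 (max (l₀ - v) (v - u₀)))^K * exp (-h v) := by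
    apply Continuous.mul
    · apply Continuous.rpow_const
      · exact continuous_const.add ((continuous_const.max
          (((continuous_const.sub continuous_id)).max (continuous_id.sub continuous_const))))
      · exact fun x => Or.inr hK
    · exact Real.continuous_exp.comp hcont.neg
  have hint : IntegrableOn (fun v => (1 + max 0 (max (l₀ - v) (v - u₀)))^K * exp (-h v))
      (Ioi (u₀+1)) := by
    apply Integrable.mono' ((hJs.const_mul (exp ε * Ir)))
    · exact hcw.aestronglyMeasurable
    · filter_upwards [ae_restrict_mem measurableSet_Ioi] with v hv
      rw [Real.norm_eq_abs, abs_of_nonneg (mul_nonneg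
        (Real.rpow_nonneg (by positivity) _) (Real.exp_pos _).le)]
      exact hpt v hv
  refine ⟨hint, ?_⟩
  have h2 : (∫ v in Ioi (u₀+1), (1 + max 0 (max (l₀ - v) (v - u₀)))^K * exp (-h v))
      ≤ ∫ v in Ioi (u₀+1), exp ε * Ir * J (v - u₀) :=
    setIntegral_mono_on hint (hJs.const_mul _) measurableSet_Ioi hpt
  refine h2.trans ?_
  rw [integral_const_mul]
  have h3 : ∫ v in Ioi (u₀+1), J (v - u₀) = ∫ t in Ioi (1:ℝ), J t := by
    rw [shift_Ioi_integral J (u₀+1) u₀, show u₀ + 1 - u₀ = (1:ℝ) by ring]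
  rw [h3]
  have h4 : ∫ t in Ioi (1:ℝ), J t ≤ ∫ t in Ioi (0:ℝ), J t := by
    apply setIntegral_mono_set hJ
    · filter_upwards [ae_restrict_mem measurableSet_Ioi] with t ht
      exact hJnn t ht
    · exact HasSubset.Subset.eventuallyLE (Ioi_subset_Ioi (by norm_num))
  calc exp ε * Ir * ∫ t in Ioi (1:ℝ), J t ≤ exp ε * Ir * ∫ t in Ioi (0:ℝ), J t := by
        apply mul_le_mul_of_nonneg_left h4 (by positivity)
    _ = exp ε * (∫ t in Ioi (0:ℝ), J t) * Ir := by ring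

private lemma weighted_left (hcont : Continuous h) (hε : 0 < ε) (hK : 0 ≤ K) (hlu : l₀ ≤ u₀)
    (Hl : ∀ u v : ℝ, u ≤ v → v ≤ l₀ → ε * (v - u) ≤ h u - h v) :
    IntegrableOn (fun v => (1 + max 0 (max (l₀ - v) (v - u₀)))^K * exp (-h v)) (Iio (l₀-1)) ∧
    (∫ v in Iio (l₀-1), (1 + max 0 (max (l₀ - v) (v - u₀)))^K * exp (-h v))
      ≤ exp ε * (∫ t in Ioi (0:ℝ), (1+t)^K * exp (-(ε*t))) *
          ∫ s in Icc (l₀-1) l₀, exp (-h s) := by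
  set J : ℝ → ℝ := fun t => (1+t)^K * exp (-(ε*t)) with hJdef
  set Il : ℝ := ∫ s in Icc (l₀-1) l₀, exp (-h s) with hIldef
  have hIl0 : 0 ≤ Il := setIntegral_nonneg measurableSet_Icc (fun x _ => (Real.exp_pos _).le)
  have hJ : IntegrableOn J (Ioi 0) := J_integrableOn hε hK
  have hJ1 : IntegrableOn J (Ioi 1) := hJ.mono_set (Ioi_subset_Ioi (by norm_num))
  have hJs : IntegrableOn (fun v => J (l₀ - v)) (Iio (l₀-1)) := refl_Iio_integrableOn hJ1
  have hJnn : ∀ t : ℝ, 0 < t → 0 ≤ J t := by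
    intro t ht
    exact mul_nonneg (Real.rpow_nonneg (by linarith) _) (Real.exp_pos _).le
  have hpt : ∀ v ∈ Iio (l₀-1),
      (1 + max 0 (max (l₀ - v) (v - u₀)))^K * exp (-h v) ≤ exp ε * Il * J (l₀ - v) := by
    intro v hv
    have hv' : v ≤ l₀ - 1 := le_of_lt hv
    have hv'' : v < l₀ - 1 := hv
    have hmax : max 0 (max (l₀ - v) (v - u₀)) = l₀ - v := by
      rw [max_eq_left (show v - u₀ ≤ l₀ - v by linarith),
        max_eq_right (show (0:ℝ) ≤ l₀ - v by linarith)]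
    rw [hmax]
    have h1 := tail_left hcont hε Hl v hv'
    have hw : (0:ℝ) ≤ (1 + (l₀ - v))^K := Real.rpow_nonneg (by linarith) _
    calc (1 + (l₀ - v))^K * exp (-h v)
        ≤ (1 + (l₀ - v))^K * (exp (ε * (1 - (l₀ - v))) * Il) :=
          mul_le_mul_of_nonneg_left h1 hw
      _ = exp ε * Il * J (l₀ - v) := by
          rw [hJdef]
          have : exp (ε * (1 - (l₀ - v))) = exp ε * exp (-(ε * (l₀ - v))) := by
            rw [← Real.exp_add]; ring_nf
          rw [this]; ring
  have hcw : Continuous fun v : ℝ => (1 + max 0 (max (l₀ - v) (v - u₀)))^K * exp (-h v) := by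
    apply Continuous.mul
    · apply Continuous.rpow_const
      · exact continuous_const.add ((continuous_const.max
          (((continuous_const.sub continuous_id)).max (continuous_id.sub continuous_const))))
      · exact fun x => Or.inr hK
    · exact Real.continuous_exp.comp hcont.neg
  have hint : IntegrableOn (fun v => (1 + max 0 (max (l₀ - v) (v - u₀)))^K * exp (-h v))
      (Iio (l₀-1)) := by
    apply Integrable.mono' ((hJs.const_mul (exp ε * Il)))
    · exact hcw.aestronglyMeasurable
    · filter_upwards [ae_restrict_mem measurableSet_Iio] with v hv
      rw [Real.norm_eq_abs, abs_of_nonneg (mul_nonneg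
        (Real.rpow_nonneg (by positivity) _) (Real.exp_pos _).le)]
      exact hpt v hv
  refine ⟨hint, ?_⟩
  have h2 : (∫ v in Iio (l₀-1), (1 + max 0 (max (l₀ - v) (v - u₀)))^K * exp (-h v))
      ≤ ∫ v in Iio (l₀-1), exp ε * Il * J (l₀ - v) :=
    setIntegral_mono_on hint (hJs.const_mul _) measurableSet_Iio hpt
  refine h2.trans ?_
  rw [integral_const_mul]
  have h3 : ∫ v in Iio (l₀-1), J (l₀ - v) = ∫ t in Ioi (1:ℝ), J t := by
    have := refl_Iio_integral J 1 l₀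
    rwa [show l₀ - 1 = l₀ - 1 from rfl] at this
  rw [h3]
  have h4 : ∫ t in Ioi (1:ℝ), J t ≤ ∫ t in Ioi (0:ℝ), J t := by
    apply setIntegral_mono_set hJ
    · filter_upwards [ae_restrict_mem measurableSet_Ioi] with t ht
      exact hJnn t ht
    · exact HasSubset.Subset.eventuallyLE (Ioi_subset_Ioi (by norm_num))
  calc exp ε * Il * ∫ t in Ioi (1:ℝ), J t ≤ exp ε * Il * ∫ t in Ioi (0:ℝ), J t := by
        apply mul_le_mul_of_nonneg_left h4 (by positivity)
    _ = exp ε * (∫ t in Ioi (0:ℝ), J t) * Il := by ring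


private lemma cont_weight (l₀ u₀ K : ℝ) (hK : 0 ≤ K) (hcont : Continuous h) :
    Continuous fun v : ℝ => (1 + max 0 (max (l₀ - v) (v - u₀)))^K * exp (-h v) := by
  apply Continuous.mul
  · apply Continuous.rpow_const
    · exact continuous_const.add ((continuous_const.max
        (((continuous_const.sub continuous_id)).max (continuous_id.sub continuous_const))))
    · exact fun x => Or.inr hK
  · exact Real.continuous_exp.comp hcont.neg

private lemma one_le_weight (l₀ u₀ K : ℝ) (hK : 0 ≤ K) (v : ℝ) :
    1 ≤ (1 + max 0 (max (l₀ - v) (v - u₀)))^K :=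
  Real.one_le_rpow (by simp [le_max_iff]) hK

/-- integrability of `exp (-h)` -/
private lemma exp_h_integrable (hcont : Continuous h) (hε : 0 < ε) (hK : 0 ≤ K) (hlu : l₀ ≤ u₀)
    (Hr : ∀ u v : ℝ, u₀ ≤ u → u ≤ v → ε * (v - u) ≤ h v - h u)
    (Hl : ∀ u v : ℝ, u ≤ v → v ≤ l₀ → ε * (v - u) ≤ h u - h v) :
    Integrable (fun u => exp (-h u)) := by
  have hparts : ∀ s : Set ℝ,
      IntegrableOn (fun v => (1 + max 0 (max (l₀ - v) (v - u₀)))^K * exp (-h v)) s →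
      IntegrableOn (fun u => exp (-h u)) s := by
    intro s hs
    apply hs.mono' (hcont.neg.rexp).aestronglyMeasurable
    filter_upwards with v
    rw [Real.norm_eq_abs, abs_of_nonneg (Real.exp_pos _).le]
    rw [Pi.neg_apply]
    nlinarith [one_le_weight l₀ u₀ K hK v, Real.exp_pos (-h v)]
  have h1 : IntegrableOn (fun u => exp (-h u)) (Iio (l₀-1)) :=
    hparts _ (weighted_left hcont hε hK hlu Hl).1
  have h3 : IntegrableOn (fun u => exp (-h u)) (Ioi (u₀+1)) :=
    hparts _ (weighted_right hcont hε hK hlu Hr).1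
  have h2 : IntegrableOn (fun u => exp (-h u)) (Icc (l₀-1) (u₀+1)) :=
    (hcont.neg.rexp).integrableOn_Icc
  rw [← integrableOn_univ, ← Iio_union_Ici (a := l₀ - 1),
    ← Icc_union_Ioi_eq_Ici (show l₀ - 1 ≤ u₀ + 1 by linarith)]
  exact (h1.union (h2.union h3))

/-- positivity of the partition function -/
private lemma exp_h_pos (hcont : Continuous h) (hlu : l₀ < u₀)
    (hint : Integrable (fun u => exp (-h u))) :
    0 < ∫ u, exp (-h u) := by
  have h1 : 0 < ∫ u in Icc l₀ u₀, exp (-h u) := by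
    rw [setIntegral_pos_iff_support_of_nonneg_ae
      (Filter.Eventually.of_forall fun x => (Real.exp_pos _).le) hint.integrableOn]
    have hsupp : Function.support (fun u : ℝ => exp (-h u)) = univ := by
      ext x; simp [Function.mem_support, Real.exp_ne_zero]
    rw [hsupp, Set.univ_inter, Real.volume_Icc]
    exact ENNReal.ofReal_pos.2 (by linarith)
  exact lt_of_lt_of_le h1 (setIntegral_le_integral hint
    (Filter.Eventually.of_forall fun x => (Real.exp_pos _).le))

/-- the weighted integral is integrable and bounded by a constant times the partition function -/
private lemma weight_int (hcont : Continuous h) (hε : 0 < ε) (hK : 0 ≤ K) (hlu : l₀ ≤ u₀)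
    (Hr : ∀ u v : ℝ, u₀ ≤ u → u ≤ v → ε * (v - u) ≤ h v - h u)
    (Hl : ∀ u v : ℝ, u ≤ v → v ≤ l₀ → ε * (v - u) ≤ h u - h v) :
    Integrable (fun v => (1 + max 0 (max (l₀ - v) (v - u₀)))^K * exp (-h v)) := by
  have h1 := (weighted_left hcont hε hK hlu Hl).1
  have h3 := (weighted_right hcont hε hK hlu Hr).1
  have h2 : IntegrableOn (fun v => (1 + max 0 (max (l₀ - v) (v - u₀)))^K * exp (-h v))
      (Icc (l₀-1) (u₀+1)) := (cont_weight l₀ u₀ K hK hcont).integrableOn_Icc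
  rw [← integrableOn_univ, ← Iio_union_Ici (a := l₀ - 1),
    ← Icc_union_Ioi_eq_Ici (show l₀ - 1 ≤ u₀ + 1 by linarith)]
  exact (h1.union (h2.union h3))

private lemma split_integral (f : ℝ → ℝ) (hf : Integrable f) (a b : ℝ) (hab : a ≤ b) :
    ∫ u, f u = (∫ u in Iio a, f u) + (∫ u in Icc a b, f u) + (∫ u in Ioi b, f u) := by
  have h1 := integral_add_compl measurableSet_Iio hf (f := f) (s := Iio a)
  rw [compl_Iio] at h1
  have h2 : Ici a = Icc a b ∪ Ioi b := (Icc_union_Ioi_eq_Ici hab).symm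
  have h3 : ∫ u in Ici a, f u = (∫ u in Icc a b, f u) + (∫ u in Ioi b, f u) := by
    rw [h2]
    apply setIntegral_union
    · rw [Set.disjoint_left]; intro x hx hx2
      exact absurd hx.2 (not_le.2 hx2)
    · exact measurableSet_Ioi
    · exact hf.integrableOn
    · exact hf.integrableOn
  linarith [h1, h3]

/-- bound for the weighted integral -/
private lemma weight_bound (hcont : Continuous h) (hε : 0 < ε) (hK : 0 ≤ K) (hlu : l₀ ≤ u₀)
    (Hr : ∀ u v : ℝ, u₀ ≤ u → u ≤ v → ε * (v - u) ≤ h v - h u)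
    (Hl : ∀ u v : ℝ, u ≤ v → v ≤ l₀ → ε * (v - u) ≤ h u - h v) :
    (∫ v, (1 + max 0 (max (l₀ - v) (v - u₀)))^K * exp (-h v))
      ≤ ((2:ℝ)^K + 2 * exp ε * (∫ t in Ioi (0:ℝ), (1+t)^K * exp (-(ε*t)))) *
        ∫ u, exp (-h u) := by
  set Z := ∫ u, exp (-h u) with hZ
  set cJ := ∫ t in Ioi (0:ℝ), (1+t)^K * exp (-(ε*t)) with hcJ
  have hZint := exp_h_integrable hcont hε hK hlu Hr Hl
  have hZ0 : 0 ≤ Z := integral_nonneg fun x => (Real.exp_pos _).le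
  have hcJ0 : 0 ≤ cJ := setIntegral_nonneg measurableSet_Ioi
    (fun t ht => mul_nonneg (Real.rpow_nonneg (by simp at ht; linarith) _) (Real.exp_pos _).le)
  have hwint := weight_int hcont hε hK hlu Hr Hl
  rw [split_integral _ hwint (l₀-1) (u₀+1) (by linarith)]
  -- mid bound
  have hmid : (∫ v in Icc (l₀-1) (u₀+1), (1 + max 0 (max (l₀ - v) (v - u₀)))^K * exp (-h v))
      ≤ (2:ℝ)^K * Z := by
    have hstep : (∫ v in Icc (l₀-1) (u₀+1), (1 + max 0 (max (l₀ - v) (v - u₀)))^K * exp (-h v))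
        ≤ ∫ v in Icc (l₀-1) (u₀+1), (2:ℝ)^K * exp (-h v) := by
      apply setIntegral_mono_on hwint.integrableOn
        ((hZint.const_mul _).integrableOn) measurableSet_Icc
      intro v hv
      have hb : (1 + max 0 (max (l₀ - v) (v - u₀))) ≤ 2 := by
        have hb' : max 0 (max (l₀ - v) (v - u₀)) ≤ 1 :=
          max_le (by norm_num) (max_le (by linarith [hv.1]) (by linarith [hv.2]))
        linarith
      have := Real.rpow_le_rpow (by positivity) hb hK
      nlinarith [Real.exp_pos (-h v)]
    refine hstep.trans ?_
    rw [integral_const_mul]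
    have : (∫ v in Icc (l₀-1) (u₀+1), exp (-h v)) ≤ Z := setIntegral_le_integral hZint
      (Filter.Eventually.of_forall fun x => (Real.exp_pos _).le)
    nlinarith [Real.rpow_nonneg (show (0:ℝ) ≤ 2 by norm_num) K]
  have htailr : (∫ v in Ioi (u₀+1), (1 + max 0 (max (l₀ - v) (v - u₀)))^K * exp (-h v))
      ≤ exp ε * cJ * Z := by
    refine (weighted_right hcont hε hK hlu Hr).2.trans ?_
    have : (∫ s in Icc u₀ (u₀+1), exp (-h s)) ≤ Z := setIntegral_le_integral hZint
      (Filter.Eventually.of_forall fun x => (Real.exp_pos _).le)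
    have he : (0:ℝ) ≤ exp ε * cJ := by positivity
    nlinarith
  have htaill : (∫ v in Iio (l₀-1), (1 + max 0 (max (l₀ - v) (v - u₀)))^K * exp (-h v))
      ≤ exp ε * cJ * Z := by
    refine (weighted_left hcont hε hK hlu Hl).2.trans ?_
    have : (∫ s in Icc (l₀-1) l₀, exp (-h s)) ≤ Z := setIntegral_le_integral hZint
      (Filter.Eventually.of_forall fun x => (Real.exp_pos _).le)
    have he : (0:ℝ) ≤ exp ε * cJ := by positivity
    nlinarith
  nlinarith

/-- comparison of the partition function with a local piece -/
private lemma Z_local (hcont : Continuous h) (hε : 0 < ε) (hlu : l₀ ≤ u₀)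
    (hint : Integrable (fun u => exp (-h u)))
    (Hr : ∀ u v : ℝ, u₀ ≤ u → u ≤ v → ε * (v - u) ≤ h v - h u)
    (Hl : ∀ u v : ℝ, u ≤ v → v ≤ l₀ → ε * (v - u) ≤ h u - h v) :
    (∫ u, exp (-h u)) ≤ (1 + 2 * exp ε * (∫ t in Ioi (1:ℝ), exp (-(ε*t)))) *
      ∫ u in Icc (l₀-1) (u₀+1), exp (-h u) := by
  set cE := ∫ t in Ioi (1:ℝ), exp (-(ε*t)) with hcE
  set Imid := ∫ u in Icc (l₀-1) (u₀+1), exp (-h u) with hImid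
  have hcE0 : 0 ≤ cE := setIntegral_nonneg measurableSet_Ioi fun t _ => (Real.exp_pos _).le
  have hImid0 : 0 ≤ Imid := setIntegral_nonneg measurableSet_Icc fun t _ => (Real.exp_pos _).le
  have hIr : (∫ s in Icc u₀ (u₀+1), exp (-h s)) ≤ Imid := by
    apply setIntegral_mono_set hint.integrableOn
      (Filter.Eventually.of_forall fun x => (Real.exp_pos _).le)
    exact HasSubset.Subset.eventuallyLE (fun x hx => ⟨by linarith [hx.1], hx.2⟩)
  have hIl : (∫ s in Icc (l₀-1) l₀, exp (-h s)) ≤ Imid := by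
    apply setIntegral_mono_set hint.integrableOn
      (Filter.Eventually.of_forall fun x => (Real.exp_pos _).le)
    exact HasSubset.Subset.eventuallyLE (fun x hx => ⟨hx.1, by linarith [hx.2]⟩)
  have hIr0 : 0 ≤ ∫ s in Icc u₀ (u₀+1), exp (-h s) :=
    setIntegral_nonneg measurableSet_Icc fun t _ => (Real.exp_pos _).le
  have hIl0 : 0 ≤ ∫ s in Icc (l₀-1) l₀, exp (-h s) :=
    setIntegral_nonneg measurableSet_Icc fun t _ => (Real.exp_pos _).le
  -- right tail
  have hexpIr : IntegrableOn (fun v => exp (-(ε * (v - u₀)))) (Ioi (u₀+1)) := by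
    apply shift_Ioi_integrableOn (f := fun t => exp (-(ε * t)))
    have := exp_neg_integrableOn_Ioi (u₀ + 1 - u₀) hε
    refine this.congr_fun (fun x _ => ?_) measurableSet_Ioi
    ring_nf
  have htailr : (∫ v in Ioi (u₀+1), exp (-h v)) ≤ exp ε * cE * Imid := by
    have hstep : (∫ v in Ioi (u₀+1), exp (-h v))
        ≤ ∫ v in Ioi (u₀+1), (exp ε * ∫ s in Icc u₀ (u₀+1), exp (-h s)) * exp (-(ε * (v - u₀))) := by
      apply setIntegral_mono_on hint.integrableOn (hexpIr.const_mul _) measurableSet_Ioi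
      intro v hv
      have h1 := tail_right hcont hε Hr v (le_of_lt hv)
      calc exp (-h v) ≤ exp (ε * (1 - (v - u₀))) * ∫ s in Icc u₀ (u₀+1), exp (-h s) := h1
        _ = (exp ε * ∫ s in Icc u₀ (u₀+1), exp (-h s)) * exp (-(ε * (v - u₀))) := by
            rw [show ε * (1 - (v - u₀)) = ε + -(ε * (v - u₀)) by ring, Real.exp_add]; ring
    refine hstep.trans ?_
    rw [integral_const_mul]
    have hshift : (∫ v in Ioi (u₀+1), exp (-(ε * (v - u₀)))) = cE := by
      have hsh := shift_Ioi_integral (fun t => exp (-(ε*t))) (u₀+1) u₀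
      rw [show u₀ + 1 - u₀ = (1:ℝ) by ring] at hsh
      rw [hcE]
      exact hsh
    rw [hshift]
    nlinarith [Real.exp_pos ε, mul_le_mul_of_nonneg_right hIr hcE0]
  -- left tail
  have hexpIl : IntegrableOn (fun v => exp (-(ε * (l₀ - v)))) (Iio (l₀-1)) := by
    have hbase : IntegrableOn (fun t => exp (-(ε * t))) (Ioi (1:ℝ)) := by
      have := exp_neg_integrableOn_Ioi (1:ℝ) hε
      refine this.congr_fun (fun x _ => ?_) measurableSet_Ioi
      ring_nf
    have := refl_Iio_integrableOn (a := l₀) (r := 1) hbase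
    rwa [show l₀ - 1 = l₀ - 1 from rfl] at this
  have htaill : (∫ v in Iio (l₀-1), exp (-h v)) ≤ exp ε * cE * Imid := by
    have hstep : (∫ v in Iio (l₀-1), exp (-h v))
        ≤ ∫ v in Iio (l₀-1), (exp ε * ∫ s in Icc (l₀-1) l₀, exp (-h s)) * exp (-(ε * (l₀ - v))) := by
      apply setIntegral_mono_on hint.integrableOn (hexpIl.const_mul _) measurableSet_Iio
      intro v hv
      have h1 := tail_left hcont hε Hl v (le_of_lt hv)
      calc exp (-h v) ≤ exp (ε * (1 - (l₀ - v))) * ∫ s in Icc (l₀-1) l₀, exp (-h s) := h1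
        _ = (exp ε * ∫ s in Icc (l₀-1) l₀, exp (-h s)) * exp (-(ε * (l₀ - v))) := by
            rw [show ε * (1 - (l₀ - v)) = ε + -(ε * (l₀ - v)) by ring, Real.exp_add]; ring
    refine hstep.trans ?_
    rw [integral_const_mul]
    have hshift : (∫ v in Iio (l₀-1), exp (-(ε * (l₀ - v)))) = cE := by
      have hsh := refl_Iio_integral (fun t => exp (-(ε*t))) 1 l₀
      rw [hcE]
      exact hsh
    rw [hshift]
    nlinarith [Real.exp_pos ε, mul_le_mul_of_nonneg_right hIl hcE0]
  have hsplit := split_integral _ hint (l₀-1) (u₀+1) (by linarith)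
  have hmid : (∫ u in Icc (l₀-1) (u₀+1), exp (-h u)) = Imid := rfl
  have hcombo : (0:ℝ) ≤ exp ε * cE := by positivity
  nlinarith [htailr, htaill]


end Tail

/-- the basic weight comparison -/
private lemma qhat_bound {A K : ℝ} (hA : 1 ≤ A) (hK : 0 ≤ K) (b c u R : ℝ) (hR : 4 ≤ R) :
    (R + |u - b| + |c - u|) ^ K ≤ (R + 2*A)^K * ((1 + |c - b|)^K *
      (1 + max 0 (max ((min b c - A) - u) (u - (max b c + A))))^K) := by
  set d := max 0 (max ((min b c - A) - u) (u - (max b c + A))) with hd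
  have hd0 : 0 ≤ d := le_max_left _ _
  have hd1 : (min b c - A) - u ≤ d := le_trans (le_max_left _ _) (le_max_right _ _)
  have hd2 : u - (max b c + A) ≤ d := le_trans (le_max_right _ _) (le_max_right _ _)
  obtain ⟨m1, m2, m3, m4⟩ := minmax_abs b c
  have hub : |u - b| ≤ |c - b| + A + d := by
    rw [abs_le]
    constructor
    · linarith
    · linarith
  have huc : |c - u| ≤ |c - b| + A + d := by
    rw [abs_le]
    constructor
    · linarith
    · linarith
  have hbase : R + |u - b| + |c - u| ≤ (R + 2*A) * ((1 + |c - b|) * (1 + d)) := by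
    have h0 : 0 ≤ |c - b| := abs_nonneg _
    nlinarith [mul_nonneg h0 hd0]
  calc (R + |u - b| + |c - u|) ^ K ≤ ((R + 2*A) * ((1 + |c - b|) * (1 + d))) ^ K :=
        Real.rpow_le_rpow (by positivity) hbase hK
    _ = (R + 2*A)^K * ((1 + |c - b|) * (1 + d))^K :=
        Real.mul_rpow (by linarith) (by positivity)
    _ = (R + 2*A)^K * ((1 + |c - b|)^K * (1 + d)^K) := by
        rw [Real.mul_rpow (by positivity) (by positivity)]

/-- bound on the difference of Hamiltonians -/
private lemma g_bound {V : ℝ → ℝ} (hconv : ConvexOn ℝ Set.univ V) {C₀ K : ℝ}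
    (hC₀ : 0 < C₀) (hK : 1 ≤ K) (hg : ∀ x, |V x| ≤ C₀ * (1 + |x|) ^ K)
    (b c b' c' u : ℝ) (hb : |b' - b| ≤ 2) (hc : |c' - c| ≤ 2) :
    |(V (u - b) + V (c - u)) - (V (u - b') + V (c' - u))|
      ≤ 2*C₀*(4 + |u - b| + |c - u|)^K * (|b' - b| + |c' - c|) := by
  have hK0 : (0:ℝ) ≤ K := by linarith
  have t1 := lipV hconv hC₀ hK hg (u - b) (u - b')
  have t2 := lipV hconv hC₀ hK hg (c - u) (c' - u)
  have e1 : |(u - b) - (u - b')| = |b' - b| := by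
    rw [show (u - b) - (u - b') = b' - b by ring]
  have e2 : |(c - u) - (c' - u)| = |c' - c| := by
    rw [show (c - u) - (c' - u) = -(c' - c) by ring, abs_neg]
  rw [e1] at t1
  rw [e2] at t2
  have m1 : (2 + max |u - b| |u - b'|) ^ K ≤ (4 + |u - b| + |c - u|) ^ K := by
    apply Real.rpow_le_rpow (by positivity) ?_ hK0
    have : |u - b'| ≤ |u - b| + 2 := by
      calc |u - b'| ≤ |u - b| + |b - b'| := by
            have := abs_sub_le u b b'  -- |u - b'| ≤ |u-b| + |b - b'|
            linarith [this]
        _ ≤ |u - b| + 2 := by rw [abs_sub_comm] at hb ⊢; linarith [abs_sub_comm b b']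
    have h2 : max |u - b| |u - b'| ≤ |u - b| + 2 := max_le (by linarith [abs_nonneg (c-u)]) this
    linarith [abs_nonneg (c - u)]
  have m2 : (2 + max |c - u| |c' - u|) ^ K ≤ (4 + |u - b| + |c - u|) ^ K := by
    apply Real.rpow_le_rpow (by positivity) ?_ hK0
    have : |c' - u| ≤ |c - u| + 2 := by
      calc |c' - u| ≤ |c' - c| + |c - u| := abs_sub_le c' c u
        _ ≤ |c - u| + 2 := by linarith
    have h2 : max |c - u| |c' - u| ≤ |c - u| + 2 := max_le (by linarith) this
    linarith [abs_nonneg (u - b)]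
  have habs : |(V (u - b) + V (c - u)) - (V (u - b') + V (c' - u))|
      ≤ |V (u - b) - V (u - b')| + |V (c - u) - V (c' - u)| := by
    rw [show (V (u - b) + V (c - u)) - (V (u - b') + V (c' - u))
      = (V (u - b) - V (u - b')) + (V (c - u) - V (c' - u)) by ring]
    exact abs_add_le _ _
  have hb0 : 0 ≤ |b' - b| := abs_nonneg _
  have hc0 : 0 ≤ |c' - c| := abs_nonneg _
  have w0 : 0 ≤ (4 + |u - b| + |c - u|) ^ K := Real.rpow_nonneg (by positivity) _
  calc |(V (u - b) + V (c - u)) - (V (u - b') + V (c' - u))|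
      ≤ |V (u - b) - V (u - b')| + |V (c - u) - V (c' - u)| := habs
    _ ≤ 2*C₀*(4 + |u - b| + |c - u|)^K * |b' - b|
        + 2*C₀*(4 + |u - b| + |c - u|)^K * |c' - c| := by
        have u1 : |V (u - b) - V (u - b')| ≤ 2*C₀*(4 + |u - b| + |c - u|)^K * |b' - b| := by
          refine t1.trans ?_
          exact mul_le_mul_of_nonneg_right (by nlinarith) hb0
        have u2 : |V (c - u) - V (c' - u)| ≤ 2*C₀*(4 + |u - b| + |c - u|)^K * |c' - c| := by
          refine t2.trans ?_
          exact mul_le_mul_of_nonneg_right (by nlinarith) hc0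
        linarith
    _ = 2*C₀*(4 + |u - b| + |c - u|)^K * (|b' - b| + |c' - c|) := by ring

/-- Boltzmann factor. -/
private def Efun (V : ℝ → ℝ) (b c : ℝ) : ℝ → ℝ := fun u => exp (-(V (u - b) + V (c - u)))

/-- polynomial weight centered at the interval `[min b c - A, max b c + A]`. -/
private def wtfun (A K b c : ℝ) : ℝ → ℝ := fun u =>
  (1 + max 0 (max ((min b c - A) - u) (u - (max b c + A))))^K

private lemma pair_facts {V : ℝ → ℝ} (hVcont : Continuous V) {ε A sp sm K : ℝ}
    (hε : 0 < ε) (hA : 1 ≤ A) (hK0 : 0 ≤ K) (hsps : ε ≤ sp - sm)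
    (Hrt : ∀ x y : ℝ, A ≤ x → x ≤ y → sp * (y - x) ≤ V y - V x)
    (Hlt : ∀ x y : ℝ, y ≤ x → x ≤ -A → V x - V y ≤ sm * (x - y)) (b c : ℝ) :
    Integrable (Efun V b c) ∧
    0 < (∫ u, Efun V b c u) ∧
    Integrable (fun u => wtfun A K b c u * Efun V b c u) ∧
    (∫ u, wtfun A K b c u * Efun V b c u)
      ≤ ((2:ℝ)^K + 2 * exp ε * (∫ t in Ioi (0:ℝ), (1+t)^K * exp (-(ε*t)))) *
        (∫ u, Efun V b c u) ∧
    (∫ u, Efun V b c u)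
      ≤ (1 + 2 * exp ε * (∫ t in Ioi (1:ℝ), exp (-(ε*t)))) *
        ∫ u in Icc ((min b c - A)-1) ((max b c + A)+1), Efun V b c u := by
  have hcont : Continuous (fun u : ℝ => V (u - b) + V (c - u)) :=
    (hVcont.comp (continuous_id.sub continuous_const)).add
      (hVcont.comp (continuous_const.sub continuous_id))
  obtain ⟨Hr, Hl⟩ := H_slopes hε hA hsps Hrt Hlt b c
  have hlu : (min b c - A) ≤ (max b c + A) := by linarith [min_le_max (a := b) (b := c)]
  have hlu' : (min b c - A) < (max b c + A) := by linarith [min_le_max (a := b) (b := c)]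
  have hint := exp_h_integrable hcont hε hK0 hlu Hr Hl
  exact ⟨hint, exp_h_pos hcont hlu' hint, weight_int hcont hε hK0 hlu Hr Hl,
    weight_bound hcont hε hK0 hlu Hr Hl, Z_local hcont hε hlu hint Hr Hl⟩

set_option maxHeartbeats 2000000 in
/-- **Total variation continuity of the resampling density.** For `V ∈ 𝒞` with growth exponent
`K` there is `C > 0` such that for all `b, b', c, c'`, writing `Δ = (|b'-b|+|c'-c|)/2`,
`(1/2)∫ |ρ_{b,c} - ρ_{b',c'}| ≤ C Δ max(1, |c-b|^K)`. -/
theorem resampling_density_tv_continuity (V : ℝ → ℝ) (hV : InClassC V)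
    (K : ℝ) (hK : 1 ≤ K) (hgrowth : ∃ C > (0 : ℝ), ∀ x : ℝ, |V x| ≤ C * (1 + |x|) ^ K) :
    ∃ C > (0 : ℝ), ∀ b b' c c' : ℝ,
      (1 / 2) * (∫ u : ℝ, |rho V b c u - rho V b' c' u|) ≤
        C * ((|b' - b| + |c' - c|) / 2) * max 1 (|c - b| ^ K) := by
  obtain ⟨C₀, hC₀, hg⟩ := hgrowth
  have hconv := hV.convex
  have hK0 : (0:ℝ) ≤ K := by linarith
  have hVcont : Continuous V := by
    rw [← continuousOn_univ]
    exact ConvexOn.continuousOn isOpen_univ hconv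
  obtain ⟨ε, A, sp, sm, hε, hA, hsps, Hrt, Hlt⟩ := slope_extract hconv hV.slopes
  set cJ := ∫ t in Ioi (0:ℝ), (1+t)^K * exp (-(ε*t)) with hcJdef
  set cE := ∫ t in Ioi (1:ℝ), exp (-(ε*t)) with hcEdef
  have hcJ0 : 0 ≤ cJ := setIntegral_nonneg measurableSet_Ioi
    (fun t ht => mul_nonneg (Real.rpow_nonneg (by simp at ht; linarith) _) (Real.exp_pos _).le)
  have hcE0 : 0 ≤ cE := setIntegral_nonneg measurableSet_Ioi fun t _ => (Real.exp_pos _).le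
  set cA := (2:ℝ)^K + 2 * exp ε * cJ with hcAdef
  have h2K : (0:ℝ) < (2:ℝ)^K := Real.rpow_pos_of_pos two_pos K
  have hcA0 : 0 < cA := by nlinarith [Real.exp_pos ε]
  set κ := 4*C₀*((4+2*A)*8)^K with hκdef
  have hbase8 : (0:ℝ) < (4+2*A)*8 := by nlinarith
  have hκ0 : 0 < κ := by
    have := Real.rpow_pos_of_pos hbase8 K
    nlinarith
  set cZ := (1 + 2 * exp ε * cE) * exp κ with hcZdef
  have hcZfac : (0:ℝ) < 1 + 2 * exp ε * cE := by nlinarith [Real.exp_pos ε]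
  have hcZ0 : 0 < cZ := mul_pos hcZfac (Real.exp_pos κ)
  have hp1 : (0:ℝ) < (4+2*A)^K := Real.rpow_pos_of_pos (by linarith) K
  have hp2 : (0:ℝ) < (8+2*A)^K := Real.rpow_pos_of_pos (by linarith) K
  have hp6 : (0:ℝ) < (6:ℝ)^K := Real.rpow_pos_of_pos (by norm_num) K
  set C2 := 4*C₀*cA*((4+2*A)^K*(2:ℝ)^K + (8+2*A)^K*(6:ℝ)^K*cZ) with hC2def
  have hC20 : 0 < C2 := by
    apply mul_pos (by positivity)
    have := mul_pos (mul_pos hp2 hp6) hcZ0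
    nlinarith [mul_pos hp1 h2K]
  refine ⟨max 1 C2, lt_of_lt_of_le one_pos (le_max_left _ _), ?_⟩
  intro b b' c c'
  obtain ⟨hE, hZ0, hWint, hWbd, hZloc⟩ := pair_facts hVcont hε hA hK0 hsps Hrt Hlt b c
  obtain ⟨hE', hZ'0, hWint', hWbd', hZloc'⟩ := pair_facts hVcont hε hA hK0 hsps Hrt Hlt b' c'
  set Z := ∫ u, Efun V b c u with hZdef
  set Z' := ∫ u, Efun V b' c' u with hZ'def
  have hEnn : ∀ u, 0 ≤ Efun V b c u := fun u => (Real.exp_pos _).le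
  have hE'nn : ∀ u, 0 ≤ Efun V b' c' u := fun u => (Real.exp_pos _).le
  have hres : ∀ u, rho V b c u = Efun V b c u / Z := fun u => rfl
  have hres' : ∀ u, rho V b' c' u = Efun V b' c' u / Z' := fun u => rfl
  have hmaxpow : max 1 (|c - b| ^ K) = (max 1 |c - b|) ^ K := max_one_rpow (abs_nonneg _) hK0
  rw [hmaxpow]
  set W := max 1 |c - b| with hWdef
  set Δ := (|b' - b| + |c' - c|) / 2 with hΔdef
  have hW1 : 1 ≤ W := le_max_left _ _
  have hWK1 : 1 ≤ W ^ K := Real.one_le_rpow hW1 hK0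
  have hWK0 : (0:ℝ) < W ^ K := by linarith
  have hΔ0 : 0 ≤ Δ := by positivity
  have hrho : Integrable (fun u => rho V b c u) := by
    have he : (fun u => rho V b c u) = fun u => Efun V b c u / Z := rfl
    rw [he]; exact hE.div_const Z
  have hrho' : Integrable (fun u => rho V b' c' u) := by
    have he : (fun u => rho V b' c' u) = fun u => Efun V b' c' u / Z' := rfl
    rw [he]; exact hE'.div_const Z'
  rcases le_or_gt 1 (Δ * W ^ K) with hreg | hreg
  · -- coarse regime: total variation is at most 1
    have h1 : (∫ u, |rho V b c u - rho V b' c' u|)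
        ≤ ∫ u, (rho V b c u + rho V b' c' u) := by
      apply integral_mono ((hrho.sub hrho').abs) (hrho.add hrho')
      intro u
      have e0 : 0 ≤ rho V b c u := by rw [hres u]; exact div_nonneg (hEnn u) hZ0.le
      have e0' : 0 ≤ rho V b' c' u := by rw [hres' u]; exact div_nonneg (hE'nn u) hZ'0.le
      have := abs_sub (rho V b c u) (rho V b' c' u)
      simp only [Pi.abs_apply, Pi.sub_apply]
      rw [abs_of_nonneg e0, abs_of_nonneg e0'] at this
      exact this
    have h2 : ∫ u, (rho V b c u + rho V b' c' u) = 2 := by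
      rw [integral_add hrho hrho']
      have e1 : ∫ u, rho V b c u = 1 := by
        have he : (fun u => rho V b c u) = fun u => Efun V b c u / Z := rfl
        rw [he, integral_div]
        exact div_self hZ0.ne'
      have e2 : ∫ u, rho V b' c' u = 1 := by
        have he : (fun u => rho V b' c' u) = fun u => Efun V b' c' u / Z' := rfl
        rw [he, integral_div]
        exact div_self hZ'0.ne'
      rw [e1, e2]; norm_num
    have hC1 : (1:ℝ) ≤ max 1 C2 := le_max_left _ _
    calc (1:ℝ)/2 * (∫ u, |rho V b c u - rho V b' c' u|) ≤ 1/2 * 2 := by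
          rw [h2] at h1; linarith only [h1]
      _ = 1 := by norm_num
      _ ≤ max 1 C2 * Δ * W ^ K := by
          have h8 := mul_le_mul_of_nonneg_right hC1 (mul_nonneg hΔ0 hWK0.le)
          calc (1:ℝ) ≤ Δ * W^K := hreg
            _ = 1 * (Δ * W^K) := by ring
            _ ≤ max 1 C2 * (Δ * W^K) := h8
            _ = max 1 C2 * Δ * W^K := by ring
  · -- fine regime
    have hfine : Δ * W ^ K ≤ 1 := hreg.le
    have hΔ1 : Δ ≤ 1 := by
      have h8 := mul_le_mul_of_nonneg_left hWK1 hΔ0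
      rw [mul_one] at h8
      linarith only [h8, hfine]
    have h2Δ : |b' - b| + |c' - c| = 2*Δ := by rw [hΔdef]; ring
    have hb2 : |b' - b| ≤ 2 := by
      linarith only [abs_nonneg (c' - c), h2Δ, hΔ1]
    have hc2 : |c' - c| ≤ 2 := by
      linarith only [abs_nonneg (b' - b), h2Δ, hΔ1]
    rw [← hcJdef, ← hcAdef] at hWbd hWbd'
    rw [← hcEdef] at hZloc hZloc'
    -- pointwise bound on the Hamiltonian difference
    have gb : ∀ u, |(V (u-b) + V (c-u)) - (V (u-b') + V (c'-u))|
        ≤ 2*C₀*(4 + |u-b| + |c-u|)^K * (2*Δ) := by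
      intro u
      have h := g_bound hconv hC₀ hK hg b c b' c' u hb2 hc2
      rw [hΔdef, show 2*((|b'-b| + |c'-c|)/2) = |b'-b| + |c'-c| by ring]
      exact h
    set c1 := (4+2*A)^K * (1 + |c - b|)^K with hc1def
    set c2 := (8+2*A)^K * (1 + |c' - b'|)^K with hc2def
    have hc1p : 0 < c1 := mul_pos hp1 (Real.rpow_pos_of_pos (by positivity) K)
    have hc2p : 0 < c2 := mul_pos hp2 (Real.rpow_pos_of_pos (by positivity) K)
    have hwtnn : ∀ u, 0 ≤ wtfun A K b c u := by
      intro u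
      have : wtfun A K b c u
          = (1 + max 0 (max ((min b c - A) - u) (u - (max b c + A))))^K := rfl
      rw [this]
      positivity
    have hwtnn' : ∀ u, 0 ≤ wtfun A K b' c' u := by
      intro u
      have : wtfun A K b' c' u
          = (1 + max 0 (max ((min b' c' - A) - u) (u - (max b' c' + A))))^K := rfl
      rw [this]
      positivity
    have hcb : (1 + |c - b|)^K ≤ 2^K * W^K := by
      have hbase : 1 + |c - b| ≤ 2 * W := by
        have h1 : |c - b| ≤ W := by rw [hWdef]; exact le_max_right _ _
        linarith only [h1, hW1]
      calc (1 + |c-b|)^K ≤ (2*W)^K := Real.rpow_le_rpow (by positivity) hbase hK0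
        _ = 2^K * W^K := Real.mul_rpow (by norm_num) (by linarith)
    have hcb' : (1 + |c' - b'|)^K ≤ 6^K * W^K := by
      have htri : |c' - b'| ≤ 4 + |c - b| := by
        calc |c' - b'| ≤ |c' - c| + |c - b'| := abs_sub_le c' c b'
          _ ≤ |c' - c| + (|c - b| + |b - b'|) := by linarith [abs_sub_le c b b']
          _ ≤ 4 + |c - b| := by rw [abs_sub_comm b b']; linarith
      have hbase : 1 + |c' - b'| ≤ 6 * W := by
        have h1 : |c - b| ≤ W := by rw [hWdef]; exact le_max_right _ _
        linarith only [h1, hW1, htri]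
      calc (1 + |c'-b'|)^K ≤ (6*W)^K := Real.rpow_le_rpow (by positivity) hbase hK0
        _ = 6^K * W^K := Real.mul_rpow (by norm_num) (by linarith)
    have hq1 : ∀ u, (4 + |u-b| + |c-u|)^K ≤ c1 * wtfun A K b c u := by
      intro u
      have h := qhat_bound hA hK0 b c u 4 le_rfl
      have e : wtfun A K b c u
          = (1 + max 0 (max ((min b c - A) - u) (u - (max b c + A))))^K := rfl
      rw [hc1def, e, mul_assoc]
      exact h
    have hq2 : ∀ u, (4 + |u-b| + |c-u|)^K ≤ c2 * wtfun A K b' c' u := by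
      intro u
      have hstep : (4 + |u-b| + |c-u|) ≤ (8 + |u-b'| + |c'-u|) := by
        have t1 : |u - b| ≤ |u - b'| + 2 := by
          have h0 := abs_sub_le u b' b
          have h1 : |b' - b| = |b - b'| := abs_sub_comm b' b
          linarith
        have t2 : |c - u| ≤ |c' - u| + 2 := by
          have h0 := abs_sub_le c c' u
          have h1 : |c - c'| = |c' - c| := abs_sub_comm c c'
          linarith
        linarith
      have h0 := Real.rpow_le_rpow (by positivity) hstep hK0
      have h := qhat_bound hA hK0 b' c' u 8 (by norm_num)
      have e : wtfun A K b' c' u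
          = (1 + max 0 (max ((min b' c' - A) - u) (u - (max b' c' + A))))^K := rfl
      rw [hc2def, e, mul_assoc]
      exact h0.trans h
    have pw1 : ∀ u, |(V (u-b) + V (c-u)) - (V (u-b') + V (c'-u))| * Efun V b c u
        ≤ (4*C₀*Δ*c1) * (wtfun A K b c u * Efun V b c u) := by
      intro u
      have h1 : |(V (u-b) + V (c-u)) - (V (u-b') + V (c'-u))|
          ≤ (4*C₀*Δ*c1) * wtfun A K b c u := by
        calc |(V (u-b) + V (c-u)) - (V (u-b') + V (c'-u))|
            ≤ 2*C₀*(4 + |u-b| + |c-u|)^K * (2*Δ) := gb u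
          _ ≤ 2*C₀*(c1 * wtfun A K b c u) * (2*Δ) :=
              mul_le_mul_of_nonneg_right
                (mul_le_mul_of_nonneg_left (hq1 u) (by positivity)) (by positivity)
          _ = (4*C₀*Δ*c1) * wtfun A K b c u := by ring
      calc |(V (u-b) + V (c-u)) - (V (u-b') + V (c'-u))| * Efun V b c u
          ≤ ((4*C₀*Δ*c1) * wtfun A K b c u) * Efun V b c u :=
            mul_le_mul_of_nonneg_right h1 (hEnn u)
        _ = (4*C₀*Δ*c1) * (wtfun A K b c u * Efun V b c u) := by ring
    have pw2 : ∀ u, |(V (u-b) + V (c-u)) - (V (u-b') + V (c'-u))| * Efun V b' c' u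
        ≤ (4*C₀*Δ*c2) * (wtfun A K b' c' u * Efun V b' c' u) := by
      intro u
      have h1 : |(V (u-b) + V (c-u)) - (V (u-b') + V (c'-u))|
          ≤ (4*C₀*Δ*c2) * wtfun A K b' c' u := by
        calc |(V (u-b) + V (c-u)) - (V (u-b') + V (c'-u))|
            ≤ 2*C₀*(4 + |u-b| + |c-u|)^K * (2*Δ) := gb u
          _ ≤ 2*C₀*(c2 * wtfun A K b' c' u) * (2*Δ) :=
              mul_le_mul_of_nonneg_right
                (mul_le_mul_of_nonneg_left (hq2 u) (by positivity)) (by positivity)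
          _ = (4*C₀*Δ*c2) * wtfun A K b' c' u := by ring
      calc |(V (u-b) + V (c-u)) - (V (u-b') + V (c'-u))| * Efun V b' c' u
          ≤ ((4*C₀*Δ*c2) * wtfun A K b' c' u) * Efun V b' c' u :=
            mul_le_mul_of_nonneg_right h1 (hE'nn u)
        _ = (4*C₀*Δ*c2) * (wtfun A K b' c' u * Efun V b' c' u) := by ring
    have hHcont : Continuous (fun u : ℝ => V (u - b) + V (c - u)) :=
      (hVcont.comp (continuous_id.sub continuous_const)).add
        (hVcont.comp (continuous_const.sub continuous_id))
    have hHcont' : Continuous (fun u : ℝ => V (u - b') + V (c' - u)) :=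
      (hVcont.comp (continuous_id.sub continuous_const)).add
        (hVcont.comp (continuous_const.sub continuous_id))
    have hgcont : Continuous fun u => |(V (u-b) + V (c-u)) - (V (u-b') + V (c'-u))| :=
      (hHcont.sub hHcont').abs
    have hEcont : Continuous (Efun V b c) := hHcont.neg.rexp
    have hE'cont : Continuous (Efun V b' c') := hHcont'.neg.rexp
    have hgE_int : Integrable
        (fun u => |(V (u-b) + V (c-u)) - (V (u-b') + V (c'-u))| * Efun V b c u) := by
      apply Integrable.mono' (hWint.const_mul (4*C₀*Δ*c1))
      · exact (hgcont.mul hEcont).aestronglyMeasurable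
      · filter_upwards with u
        rw [Real.norm_eq_abs, abs_of_nonneg (mul_nonneg (abs_nonneg _) (hEnn u))]
        exact pw1 u
    have hgE'_int : Integrable
        (fun u => |(V (u-b) + V (c-u)) - (V (u-b') + V (c'-u))| * Efun V b' c' u) := by
      apply Integrable.mono' (hWint'.const_mul (4*C₀*Δ*c2))
      · exact (hgcont.mul hE'cont).aestronglyMeasurable
      · filter_upwards with u
        rw [Real.norm_eq_abs, abs_of_nonneg (mul_nonneg (abs_nonneg _) (hE'nn u))]
        exact pw2 u
    set D := ∫ u, |Efun V b c u - Efun V b' c' u| with hDdef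
    have hD0 : 0 ≤ D := integral_nonneg fun u => abs_nonneg _
    have hD1 : D ≤ (∫ u, |(V (u-b) + V (c-u)) - (V (u-b') + V (c'-u))| * Efun V b c u)
        + (∫ u, |(V (u-b) + V (c-u)) - (V (u-b') + V (c'-u))| * Efun V b' c' u) := by
      rw [hDdef, ← integral_add hgE_int hgE'_int]
      apply integral_mono ((hE.sub hE').abs) (hgE_int.add hgE'_int)
      intro u
      have h1 : |Efun V b c u - Efun V b' c' u|
          ≤ |(V (u-b) + V (c-u)) - (V (u-b') + V (c'-u))|
            * (Efun V b c u + Efun V b' c' u) :=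
        exp_diff_le (V (u-b) + V (c-u)) (V (u-b') + V (c'-u))
      simp only [Pi.abs_apply, Pi.sub_apply, Pi.add_apply]
      calc |Efun V b c u - Efun V b' c' u|
          ≤ |(V (u-b) + V (c-u)) - (V (u-b') + V (c'-u))|
            * (Efun V b c u + Efun V b' c' u) := h1
        _ = |(V (u-b) + V (c-u)) - (V (u-b') + V (c'-u))| * Efun V b c u
            + |(V (u-b) + V (c-u)) - (V (u-b') + V (c'-u))| * Efun V b' c' u := by ring
    have hT1 : (∫ u, |(V (u-b) + V (c-u)) - (V (u-b') + V (c'-u))| * Efun V b c u)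
        ≤ (4*C₀*Δ*c1) * (cA * Z) := by
      have h := integral_mono hgE_int (hWint.const_mul (4*C₀*Δ*c1)) pw1
      rw [integral_const_mul] at h
      exact h.trans (mul_le_mul_of_nonneg_left hWbd (by positivity))
    have hT2 : (∫ u, |(V (u-b) + V (c-u)) - (V (u-b') + V (c'-u))| * Efun V b' c' u)
        ≤ (4*C₀*Δ*c2) * (cA * Z') := by
      have h := integral_mono hgE'_int (hWint'.const_mul (4*C₀*Δ*c2)) pw2
      rw [integral_const_mul] at h
      exact h.trans (mul_le_mul_of_nonneg_left hWbd' (by positivity))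
    -- comparison of partition functions
    have hZcomp : Z' ≤ cZ * Z := by
      have hsub : Icc ((min b' c' - A)-1) ((max b' c' + A)+1)
          ⊆ Icc (min b c - A - 3) (max b c + A + 3) := by
        apply Icc_subset_Icc
        · have h1 : min b c - 2 ≤ min b' c' := by
            rcases abs_le.1 hb2 with ⟨hb1, hb1'⟩
            rcases abs_le.1 hc2 with ⟨hc1, hc1'⟩
            rcases le_total b' c' with h | h
            · rw [min_eq_left h]
              linarith only [min_le_left b c, hb1]
            · rw [min_eq_right h]
              linarith only [min_le_right b c, hc1]
          linarith only [h1]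
        · have h1 : max b' c' ≤ max b c + 2 := by
            rcases abs_le.1 hb2 with ⟨hb1, hb1'⟩
            rcases abs_le.1 hc2 with ⟨hc1, hc1'⟩
            rcases le_total b' c' with h | h
            · rw [max_eq_right h]
              linarith only [le_max_right b c, hc1']
            · rw [max_eq_left h]
              linarith only [le_max_left b c, hb1']
          linarith only [h1]
      have hmid1 : (∫ u in Icc ((min b' c' - A)-1) ((max b' c' + A)+1), Efun V b' c' u)
          ≤ ∫ u in Icc (min b c - A - 3) (max b c + A + 3), Efun V b' c' u :=
        setIntegral_mono_set hE'.integrableOn (Filter.Eventually.of_forall hE'nn)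
          (HasSubset.Subset.eventuallyLE hsub)
      have hmid2 : (∫ u in Icc (min b c - A - 3) (max b c + A + 3), Efun V b' c' u)
          ≤ ∫ u in Icc (min b c - A - 3) (max b c + A + 3), exp κ * Efun V b c u := by
        apply setIntegral_mono_on hE'.integrableOn
          ((hE.const_mul (exp κ)).integrableOn) measurableSet_Icc
        intro u hu
        have hdd3 : max 0 (max ((min b c - A) - u) (u - (max b c + A))) ≤ 3 := by
          apply max_le (by norm_num)
          apply max_le
          · linarith only [hu.1]
          · linarith only [hu.2]
        have hwt : wtfun A K b c u ≤ 4^K := by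
          have hb4 : (1 + max 0 (max ((min b c - A) - u) (u - (max b c + A)))) ≤ 4 := by
            linarith only [hdd3]
          have e : wtfun A K b c u
              = (1 + max 0 (max ((min b c - A) - u) (u - (max b c + A))))^K := rfl
          rw [e]
          exact Real.rpow_le_rpow (by positivity) hb4 hK0
        have hgu : |(V (u-b) + V (c-u)) - (V (u-b') + V (c'-u))| ≤ κ := by
          have h3 : c1 * wtfun A K b c u ≤ ((4+2*A)^K * (2^K*W^K)) * 4^K := by
            rw [hc1def]
            apply mul_le_mul (mul_le_mul le_rfl hcb (by positivity) hp1.le) hwt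
              (hwtnn u) (by positivity)
          have h4 : ((4+2*A):ℝ)^K * ((2:ℝ)^K*(4:ℝ)^K) = ((4+2*A)*8)^K := by
            rw [← Real.mul_rpow (by norm_num) (by norm_num),
              show (2:ℝ)*4 = 8 by norm_num,
              ← Real.mul_rpow (by linarith) (by norm_num)]
          calc |(V (u-b) + V (c-u)) - (V (u-b') + V (c'-u))|
              ≤ 2*C₀*(4 + |u-b| + |c-u|)^K * (2*Δ) := gb u
            _ ≤ 2*C₀*(c1 * wtfun A K b c u) * (2*Δ) :=
                mul_le_mul_of_nonneg_right
                  (mul_le_mul_of_nonneg_left (hq1 u) (by positivity)) (by positivity)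
            _ ≤ 2*C₀*(((4+2*A)^K * (2^K*W^K)) * 4^K) * (2*Δ) :=
                mul_le_mul_of_nonneg_right
                  (mul_le_mul_of_nonneg_left h3 (by positivity)) (by positivity)
            _ = (4*C₀*((4+2*A)^K * ((2:ℝ)^K*(4:ℝ)^K))) * (Δ * W^K) := by ring
            _ = (4*C₀*((4+2*A)*8)^K) * (Δ * W^K) := by rw [h4]
            _ ≤ (4*C₀*((4+2*A)*8)^K) * 1 := by
                apply mul_le_mul_of_nonneg_left hfine (by positivity)
            _ = κ := by rw [hκdef]; ring
        have hle : -(V (u-b') + V (c'-u)) ≤ κ + -(V (u-b) + V (c-u)) := by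
          have h5 := le_abs_self ((V (u-b) + V (c-u)) - (V (u-b') + V (c'-u)))
          linarith only [h5, hgu]
        calc Efun V b' c' u = exp (-(V (u-b') + V (c'-u))) := rfl
          _ ≤ exp (κ + -(V (u-b) + V (c-u))) := Real.exp_le_exp.2 hle
          _ = exp κ * Efun V b c u := by rw [Real.exp_add]; rfl
      have hmid3 : (∫ u in Icc (min b c - A - 3) (max b c + A + 3), exp κ * Efun V b c u)
          ≤ exp κ * Z := by
        rw [integral_const_mul]
        exact mul_le_mul_of_nonneg_left (setIntegral_le_integral hE
          (Filter.Eventually.of_forall hEnn)) (Real.exp_pos κ).le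
      calc Z' ≤ (1 + 2*exp ε*cE) * ∫ u in Icc ((min b' c' - A)-1) ((max b' c' + A)+1),
              Efun V b' c' u := hZloc'
        _ ≤ (1 + 2*exp ε*cE) * (exp κ * Z) :=
            mul_le_mul_of_nonneg_left (hmid1.trans (hmid2.trans hmid3)) hcZfac.le
        _ = cZ * Z := by rw [hcZdef]; ring
    -- total variation inequality
    have habsZ : |Z - Z'| ≤ D := by
      have h1 : Z - Z' = ∫ u, (Efun V b c u - Efun V b' c' u) := (integral_sub hE hE').symm
      rw [hDdef, h1]
      have := norm_integral_le_integral_norm (fun u => Efun V b c u - Efun V b' c' u) (μ := volume)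
      simpa [Real.norm_eq_abs] using this
    have hptv : ∀ u, |rho V b c u - rho V b' c' u|
        ≤ |Efun V b c u - Efun V b' c' u| / Z + Efun V b' c' u * (|Z - Z'| / (Z*Z')) := by
      intro u
      rw [hres u, hres' u]
      have hrw : Efun V b c u / Z - Efun V b' c' u / Z'
          = (Efun V b c u - Efun V b' c' u)/Z + Efun V b' c' u * ((Z' - Z)/(Z*Z')) := by
        field_simp
        ring
      rw [hrw]
      calc |(Efun V b c u - Efun V b' c' u)/Z + Efun V b' c' u * ((Z' - Z)/(Z*Z'))|
          ≤ |(Efun V b c u - Efun V b' c' u)/Z| + |Efun V b' c' u * ((Z' - Z)/(Z*Z'))| :=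
            abs_add_le _ _
        _ = |Efun V b c u - Efun V b' c' u| / Z + Efun V b' c' u * (|Z - Z'| / (Z*Z')) := by
            rw [abs_div, abs_of_pos hZ0, abs_mul, abs_of_nonneg (hE'nn u), abs_div, abs_mul,
              abs_of_pos hZ0, abs_of_pos hZ'0, abs_sub_comm Z' Z]
    have htv : (∫ u, |rho V b c u - rho V b' c' u|) ≤ D/Z + Z' * (|Z - Z'|/(Z*Z')) := by
      have hint1 : Integrable (fun u => |Efun V b c u - Efun V b' c' u| / Z) :=
        ((hE.sub hE').abs).div_const Z
      have hint2 : Integrable (fun u => Efun V b' c' u * (|Z - Z'| / (Z*Z'))) :=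
        hE'.mul_const _
      calc (∫ u, |rho V b c u - rho V b' c' u|)
          ≤ ∫ u, (|Efun V b c u - Efun V b' c' u| / Z
              + Efun V b' c' u * (|Z - Z'| / (Z*Z'))) :=
            integral_mono ((hrho.sub hrho').abs) (hint1.add hint2) hptv
        _ = D/Z + Z' * (|Z - Z'|/(Z*Z')) := by
            rw [integral_add hint1 hint2, integral_div, integral_mul_const]
    have htv2 : (∫ u, |rho V b c u - rho V b' c' u|) ≤ 2 * (D/Z) := by
      have hZZ : Z' * (|Z - Z'|/(Z*Z')) = |Z-Z'|/Z := by
        field_simp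
      have hdd : |Z-Z'|/Z ≤ D/Z := by gcongr
      rw [hZZ] at htv
      linarith only [htv, hdd]
    have hDZ : D ≤ (max 1 C2 * Δ * W^K) * Z := by
      have hc1b : c1 ≤ (4+2*A)^K * (2^K * W^K) := by
        rw [hc1def]
        exact mul_le_mul_of_nonneg_left hcb hp1.le
      have hc2b : c2 ≤ (8+2*A)^K * (6^K * W^K) := by
        rw [hc2def]
        exact mul_le_mul_of_nonneg_left hcb' hp2.le
      have hT2' : (∫ u, |(V (u-b) + V (c-u)) - (V (u-b') + V (c'-u))| * Efun V b' c' u)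
          ≤ (4*C₀*Δ*c2) * (cA * (cZ * Z)) := by
        refine hT2.trans ?_
        apply mul_le_mul_of_nonneg_left _ (by positivity)
        exact mul_le_mul_of_nonneg_left hZcomp hcA0.le
      calc D ≤ (∫ u, |(V (u-b) + V (c-u)) - (V (u-b') + V (c'-u))| * Efun V b c u)
            + (∫ u, |(V (u-b) + V (c-u)) - (V (u-b') + V (c'-u))| * Efun V b' c' u) := hD1
        _ ≤ (4*C₀*Δ*c1) * (cA * Z) + (4*C₀*Δ*c2) * (cA * (cZ * Z)) :=
            add_le_add hT1 hT2'
        _ ≤ (4*C₀*Δ*((4+2*A)^K * (2^K * W^K))) * (cA * Z)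
            + (4*C₀*Δ*((8+2*A)^K * (6^K * W^K))) * (cA * (cZ * Z)) := by
            have e1 : (0:ℝ) ≤ cA * Z := by positivity
            have e2 : (0:ℝ) ≤ cA * (cZ * Z) := by positivity
            have f1 : 4*C₀*Δ*c1 ≤ 4*C₀*Δ*((4+2*A)^K * (2^K * W^K)) := by
              apply mul_le_mul_of_nonneg_left hc1b (by positivity)
            have f2 : 4*C₀*Δ*c2 ≤ 4*C₀*Δ*((8+2*A)^K * (6^K * W^K)) := by
              apply mul_le_mul_of_nonneg_left hc2b (by positivity)
            exact add_le_add (mul_le_mul_of_nonneg_right f1 e1)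
              (mul_le_mul_of_nonneg_right f2 e2)
        _ = (C2 * Δ * W^K) * Z := by rw [hC2def]; ring
        _ ≤ (max 1 C2 * Δ * W^K) * Z := by
            have h6 : C2 ≤ max 1 C2 := le_max_right _ _
            exact mul_le_mul_of_nonneg_right (mul_le_mul_of_nonneg_right
              (mul_le_mul_of_nonneg_right h6 hΔ0) hWK0.le) hZ0.le
    calc 1/2 * (∫ u, |rho V b c u - rho V b' c' u|) ≤ 1/2 * (2*(D/Z)) := by
          linarith only [htv2]
      _ = D / Z := by ring
      _ ≤ max 1 C2 * Δ * W ^ K := by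
          rw [div_le_iff₀ hZ0]
          exact hDZ


end
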